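/- Let d ≥ 1 be an integer and let V_d := π^{d/2} / Γ(d/2 + 1) be the volume of the unit ball of ℝ^d. Then Σ_{w ∈ ℤ^d, 1/ε < |w| ≤ 2/ε} |w|^{-d} converges to d V_d ln 2 as ε → 0⁺. -/

import Mathlib

/-- The lattice point `w ∈ ℤ^d ⊂ ℝ^d` (with the Euclidean norm). -/
noncomputable def intPt (d : ℕ) (w : Fin d → ℤ) : EuclideanSpace ℝ (Fin d) :=
  (WithLp.equiv 2 (Fin d → ℝ)).symm fun i => (w i : ℝ)

/-- The volume `V_d = π^{d/2} / Γ(d/2 + 1)` of the unit ball of `ℝ^d`. -/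
noncomputable def unitBallVol (d : ℕ) : ℝ :=
  Real.pi ^ ((d : ℝ) / 2) / Real.Gamma ((d : ℝ) / 2 + 1)

open MeasureTheory Set

namespace Shell

variable {d : ℕ}

lemma intPt_apply (w : Fin d → ℤ) (i : Fin d) : intPt d w i = (w i : ℝ) := rfl

lemma abs_coord_le (w : Fin d → ℤ) (i : Fin d) : |(w i : ℝ)| ≤ ‖intPt d w‖ := by
  have := EuclideanSpace.norm_eq (intPt d w)
  rw [this]
  rw [← Real.sqrt_sq_eq_abs]
  apply Real.sqrt_le_sqrt
  have : ‖intPt d w i‖ ^ 2 ≤ ∑ j, ‖intPt d w j‖ ^ 2 :=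
    Finset.single_le_sum (f := fun j => ‖intPt d w j‖ ^ 2) (fun j _ => sq_nonneg _)
      (Finset.mem_univ i)
  simpa [intPt_apply, Real.norm_eq_abs, sq_abs] using this

lemma shell_finite (a b : ℝ) :
    {w : Fin d → ℤ | a < ‖intPt d w‖ ∧ ‖intPt d w‖ ≤ b}.Finite := by
  apply Set.Finite.subset (Set.finite_Icc (fun _ : Fin d => -⌈b⌉) fun _ => ⌈b⌉)
  intro w hw
  simp only [Set.mem_Icc, Pi.le_def] at *
  constructor <;> intro i <;>
  · have h1 : |(w i : ℝ)| ≤ b := (abs_coord_le w i).trans hw.2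
    have h2 : (w i : ℝ) ≤ ⌈b⌉ := le_trans (le_abs_self _) (h1.trans (Int.le_ceil b))
    have h3 : -(⌈b⌉ : ℝ) ≤ (w i : ℝ) := by
      have := (neg_abs_le ((w i : ℝ))); nlinarith [Int.le_ceil b, neg_le_neg h1]
    first
      | exact_mod_cast h3
      | exact_mod_cast h2

end Shell

namespace Shell

def cube (d : ℕ) (w : Fin d → ℤ) : Set (EuclideanSpace ℝ (Fin d)) :=
  {x | ∀ i, (w i : ℝ) ≤ x i ∧ x i < w i + 1}

lemma cube_eq (w : Fin d → ℤ) :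
    cube d w = (MeasurableEquiv.toLp 2 (Fin d → ℝ)).symm ⁻¹'
      (Set.univ.pi fun i => Ico ((w i : ℝ)) (w i + 1)) := by
  ext x
  simp [cube, Set.mem_pi, Set.mem_Ico]

lemma measurableSet_cube (w : Fin d → ℤ) : MeasurableSet (cube d w) := by
  rw [cube_eq]
  exact (MeasurableEquiv.toLp 2 (Fin d → ℝ)).symm.measurable
    (MeasurableSet.univ_pi fun i => measurableSet_Ico)

lemma volume_cube (w : Fin d → ℤ) : volume (cube d w) = 1 := by
  rw [cube_eq,
    (EuclideanSpace.volume_preserving_symm_measurableEquiv_toLp (Fin d)).measure_preimage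
      (MeasurableSet.univ_pi fun i => measurableSet_Ico).nullMeasurableSet,
    volume_pi_pi]
  simp

lemma cube_disjoint {w w' : Fin d → ℤ} (h : w ≠ w') : Disjoint (cube d w) (cube d w') := by
  rw [Set.disjoint_left]
  rintro x hx hx'
  apply h
  funext i
  have h1 := hx i; have h2 := hx' i
  have a1 : ((w i : ℝ)) < (w' i : ℝ) + 1 := lt_of_le_of_lt h1.1 h2.2
  have a2 : ((w' i : ℝ)) < (w i : ℝ) + 1 := lt_of_le_of_lt h2.1 h1.2
  have b1 : w i < w' i + 1 := by exact_mod_cast a1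
  have b2 : w' i < w i + 1 := by exact_mod_cast a2
  omega

lemma mem_cube_floor (x : EuclideanSpace ℝ (Fin d)) : x ∈ cube d (fun i => ⌊x i⌋) := by
  intro i
  exact ⟨Int.floor_le _, Int.lt_floor_add_one _⟩

lemma dist_le_of_mem_cube {w : Fin d → ℤ} {x : EuclideanSpace ℝ (Fin d)}
    (hx : x ∈ cube d w) : dist x (intPt d w) ≤ Real.sqrt d := by
  rw [EuclideanSpace.dist_eq]
  have : ∑ i, dist (x i) (intPt d w i) ^ 2 ≤ (d : ℝ) := by
    have : ∀ i, dist (x i) (intPt d w i) ^ 2 ≤ 1 := by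
      intro i
      have h := hx i
      rw [Real.dist_eq, intPt_apply, sq_abs]
      nlinarith [h.1, h.2]
    calc ∑ i, dist (x i) (intPt d w i) ^ 2 ≤ ∑ _i : Fin d, (1:ℝ) :=
          Finset.sum_le_sum fun i _ => this i
      _ = d := by simp
  exact Real.sqrt_le_sqrt this

end Shell

namespace Shell

lemma measurableSet_ann (a b : ℝ) :
    MeasurableSet {x : EuclideanSpace ℝ (Fin d) | a < ‖x‖ ∧ ‖x‖ ≤ b} := by
  exact (measurableSet_lt measurable_const measurable_norm).inter
    (measurableSet_le measurable_norm measurable_const)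

lemma integrableOn_ann {a b : ℝ} (ha : 0 < a) :
    IntegrableOn (fun x : EuclideanSpace ℝ (Fin d) => (‖x‖ ^ d)⁻¹)
      {x | a < ‖x‖ ∧ ‖x‖ ≤ b} := by
  apply Measure.integrableOn_of_bounded (M := (a ^ d)⁻¹)
  · have : {x : EuclideanSpace ℝ (Fin d) | a < ‖x‖ ∧ ‖x‖ ≤ b} ⊆ Metric.closedBall 0 b := by
      intro x hx; simpa [Metric.mem_closedBall] using hx.2
    exact ((measure_mono this).trans_lt (measure_closedBall_lt_top)).ne
  · exact ((measurable_norm.pow_const d).inv).aestronglyMeasurable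
  · filter_upwards [ae_restrict_mem (measurableSet_ann a b)] with x hx
    rw [Real.norm_eq_abs, abs_of_nonneg (by positivity)]
    exact inv_anti₀ (by positivity) (pow_le_pow_left₀ ha.le hx.1.le d)

lemma integral_ann (hd : 1 ≤ d) {a b : ℝ} (ha : 0 < a) (hab : a ≤ b) :
    ∫ x in {x : EuclideanSpace ℝ (Fin d) | a < ‖x‖ ∧ ‖x‖ ≤ b}, (‖x‖ ^ d)⁻¹ =
      d * unitBallVol d * (Real.log b - Real.log a) := by
  haveI : Nonempty (Fin d) := ⟨⟨0, hd⟩⟩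
  haveI : Nontrivial (EuclideanSpace ℝ (Fin d)) := inferInstance
  classical
  set f : ℝ → ℝ := fun y => if a < y ∧ y ≤ b then (y ^ d)⁻¹ else 0 with hf
  have key := MeasureTheory.integral_fun_norm_addHaar
    (volume : Measure (EuclideanSpace ℝ (Fin d))) f
  have hL : (∫ x : EuclideanSpace ℝ (Fin d), f ‖x‖) =
      ∫ x in {x : EuclideanSpace ℝ (Fin d) | a < ‖x‖ ∧ ‖x‖ ≤ b}, (‖x‖ ^ d)⁻¹ := by
    rw [← integral_indicator (measurableSet_ann a b)]
    congr 1
    funext x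
    simp only [hf, Set.indicator_apply, Set.mem_setOf_eq]
  have hR : (∫ y in Ioi (0:ℝ), y ^ (d - 1) • f y) = Real.log b - Real.log a := by
    have h1 : (fun y : ℝ => y ^ (d - 1) • f y) =
        Set.indicator (Ioc a b) (fun y => y ^ (d - 1) * (y ^ d)⁻¹) := by
      funext y
      simp only [hf, Set.indicator_apply, Set.mem_Ioc, smul_eq_mul]
      split_ifs <;> simp
    have hsub : Ioc a b ⊆ Ioi 0 := fun y hy => ha.trans hy.1
    rw [h1, setIntegral_indicator measurableSet_Ioc,
      Set.inter_eq_self_of_subset_right hsub]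
    have h2 : ∫ y in Ioc a b, y ^ (d - 1) * (y ^ d)⁻¹ = ∫ y in Ioc a b, y⁻¹ := by
      apply setIntegral_congr_fun measurableSet_Ioc
      intro y hy
      have hy0 : y ≠ 0 := (ha.trans hy.1).ne'
      show y ^ (d - 1) * (y ^ d)⁻¹ = y⁻¹
      field_simp
      rw [← pow_succ, Nat.sub_add_cancel hd]
    rw [h2, ← intervalIntegral.integral_of_le hab, integral_inv_of_pos ha (ha.trans_le hab),
      Real.log_div (ha.trans_le hab).ne' ha.ne']
  have hV : (volume (Metric.ball (0 : EuclideanSpace ℝ (Fin d)) 1)).toReal = unitBallVol d := by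
    rw [EuclideanSpace.volume_ball]
    have hΓ : 0 < Real.Gamma ((d : ℝ) / 2 + 1) := Real.Gamma_pos_of_pos (by positivity)
    have hsq : Real.sqrt Real.pi ^ d = Real.pi ^ ((d : ℝ) / 2) := by
      rw [Real.sqrt_eq_rpow, ← Real.rpow_natCast (Real.pi ^ ((1:ℝ)/2)) d,
        ← Real.rpow_mul Real.pi_pos.le]
      congr 1
      ring
    simp only [ENNReal.ofReal_one, one_pow, one_mul, Fintype.card_fin]
    rw [ENNReal.toReal_ofReal (by positivity), unitBallVol, hsq]
  rw [hL, finrank_euclideanSpace_fin] at key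
  rw [key, hR, measureReal_def, hV, nsmul_eq_mul, smul_eq_mul]
  ring

end Shell

namespace Shell

lemma norm_le_of_mem_cube {w : Fin d → ℤ} {x : EuclideanSpace ℝ (Fin d)} (hx : x ∈ cube d w) :
    ‖x‖ ≤ ‖intPt d w‖ + Real.sqrt d ∧ ‖intPt d w‖ - Real.sqrt d ≤ ‖x‖ := by
  have h := dist_le_of_mem_cube hx
  have h1 := abs_norm_sub_norm_le x (intPt d w)
  rw [← dist_eq_norm] at h1
  have := abs_le.mp (h1.trans h)
  constructor <;> linarith [this.1, this.2]

lemma cube_integral_ge (hd : 1 ≤ d) (w : Fin d → ℤ)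
    (hint : IntegrableOn (fun x : EuclideanSpace ℝ (Fin d) => (‖x‖ ^ d)⁻¹) (cube d w))
    (hpos : 0 < ‖intPt d w‖ - Real.sqrt d) :
    ((‖intPt d w‖ + Real.sqrt d) ^ d)⁻¹ ≤ ∫ x in cube d w, (‖x‖ ^ d)⁻¹ := by
  have hs : (0:ℝ) < Real.sqrt d := Real.sqrt_pos.mpr (by exact_mod_cast hd)
  have h0 : (0:ℝ) < ‖intPt d w‖ + Real.sqrt d := by linarith
  calc ((‖intPt d w‖ + Real.sqrt d) ^ d)⁻¹
      = ∫ _x in cube d w, ((‖intPt d w‖ + Real.sqrt d) ^ d)⁻¹ := by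
        rw [setIntegral_const, measureReal_def, volume_cube]; simp
    _ ≤ ∫ x in cube d w, (‖x‖ ^ d)⁻¹ := by
        apply setIntegral_mono_on (integrableOn_const (by rw [volume_cube]; simp))
          hint (measurableSet_cube w)
        intro x hx
        have hxpos : 0 < ‖x‖ := lt_of_lt_of_le hpos (norm_le_of_mem_cube hx).2
        exact inv_anti₀ (by positivity)
          (pow_le_pow_left₀ (norm_nonneg x) (norm_le_of_mem_cube hx).1 d)

lemma cube_integral_le (w : Fin d → ℤ)
    (hint : IntegrableOn (fun x : EuclideanSpace ℝ (Fin d) => (‖x‖ ^ d)⁻¹) (cube d w))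
    (hpos : 0 < ‖intPt d w‖ - Real.sqrt d) :
    ∫ x in cube d w, (‖x‖ ^ d)⁻¹ ≤ ((‖intPt d w‖ - Real.sqrt d) ^ d)⁻¹ := by
  calc ∫ x in cube d w, (‖x‖ ^ d)⁻¹
      ≤ ∫ _x in cube d w, ((‖intPt d w‖ - Real.sqrt d) ^ d)⁻¹ := by
        apply setIntegral_mono_on hint
          (integrableOn_const (by rw [volume_cube]; simp))
          (measurableSet_cube w)
        intro x hx
        exact inv_anti₀ (by positivity)
          (pow_le_pow_left₀ hpos.le (norm_le_of_mem_cube hx).2 d)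
    _ = ((‖intPt d w‖ - Real.sqrt d) ^ d)⁻¹ := by
        rw [setIntegral_const, measureReal_def, volume_cube]; simp

end Shell

open MeasureTheory Set Shell in
open scoped Classical in
set_option maxHeartbeats 1000000 in
lemma main_bounds (d : ℕ) (hd : 1 ≤ d) (ε : ℝ)
    (hε : ε ∈ Set.Ioo (0:ℝ) (2*(Real.sqrt d+1))⁻¹) :
    (1 - Real.sqrt d*ε)^d * (((d:ℝ) * unitBallVol d) *
        (Real.log (2 - Real.sqrt d*ε) - Real.log (1 + Real.sqrt d*ε))) ≤
      (∑' w : Fin d → ℤ,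
        (if 1 / ε < ‖intPt d w‖ ∧ ‖intPt d w‖ ≤ 2 / ε then (‖intPt d w‖ ^ d)⁻¹ else 0)) ∧
    (∑' w : Fin d → ℤ,
        (if 1 / ε < ‖intPt d w‖ ∧ ‖intPt d w‖ ≤ 2 / ε then (‖intPt d w‖ ^ d)⁻¹ else 0)) ≤
      (1 + Real.sqrt d*ε)^d * (((d:ℝ) * unitBallVol d) *
        (Real.log (2 + Real.sqrt d*ε) - Real.log (1 - Real.sqrt d*ε))) := by
  classical
  obtain ⟨hε0, hεδ⟩ := hε
  set s := Real.sqrt d with hs_def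
  have hs1 : (1:ℝ) ≤ s := by
    rw [hs_def, show (1:ℝ) = Real.sqrt 1 by simp]
    exact Real.sqrt_le_sqrt (by exact_mod_cast hd)
  have hs0 : (0:ℝ) < s := lt_of_lt_of_le one_pos hs1
  -- basic numeric facts
  have hmul : 2*(s+1)*ε < 1 := by
    have h := mul_lt_mul_of_pos_left hεδ (show (0:ℝ) < 2*(s+1) by positivity)
    rwa [mul_inv_cancel₀ (by positivity : (2*(s+1) : ℝ) ≠ 0)] at h
  have hinv : 2*(s+1) < 1/ε := (lt_div_iff₀ hε0).mpr hmul
  have hse : s*ε < 1/2 := by nlinarith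
  have h1s : (0:ℝ) < 1 - s*ε := by nlinarith
  have h1s' : (0:ℝ) < 1 + s*ε := by nlinarith
  have h1pos : 0 < 1/ε - s := by nlinarith
  have h2e : 2/ε = 2*(1/ε) := by ring
  have h2this : 1/ε + s ≤ 2/ε - s := by rw [h2e]; nlinarith
  have hAle : 1/ε - s ≤ 2/ε + s := by rw [h2e]; nlinarith
  have hiε : (0:ℝ) < 1/ε := by positivity
  -- the shell finset
  set S := (shell_finite (d := d) (1/ε) (2/ε)).toFinset with hS_def
  have hmemS : ∀ w : Fin d → ℤ, w ∈ S ↔ 1/ε < ‖intPt d w‖ ∧ ‖intPt d w‖ ≤ 2/ε := by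
    intro w; rw [hS_def, Set.Finite.mem_toFinset]; rfl
  -- tsum is the finite sum
  have hsum : (∑' w : Fin d → ℤ,
      (if 1 / ε < ‖intPt d w‖ ∧ ‖intPt d w‖ ≤ 2 / ε then (‖intPt d w‖ ^ d)⁻¹ else 0)) =
      ∑ w ∈ S, (‖intPt d w‖ ^ d)⁻¹ := by
    rw [tsum_eq_sum (s := S) (fun w hw => if_neg (fun h => hw ((hmemS w).mpr h)))]
    exact Finset.sum_congr rfl fun w hw => if_pos ((hmemS w).mp hw)
  -- integrability
  have hIntAp : IntegrableOn (fun x : EuclideanSpace ℝ (Fin d) => (‖x‖ ^ d)⁻¹)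
      {x | 1/ε - s < ‖x‖ ∧ ‖x‖ ≤ 2/ε + s} := integrableOn_ann h1pos
  have hUsub : (⋃ w ∈ S, cube d w) ⊆ {x | 1/ε - s < ‖x‖ ∧ ‖x‖ ≤ 2/ε + s} := by
    intro x hx
    simp only [Set.mem_iUnion] at hx
    obtain ⟨w, hwS, hxw⟩ := hx
    have hw := (hmemS w).mp hwS
    have hb := norm_le_of_mem_cube hxw
    exact ⟨by linarith [hb.2, hw.1], by linarith [hb.1, hw.2]⟩
  have hAsub : {x : EuclideanSpace ℝ (Fin d) | 1/ε + s < ‖x‖ ∧ ‖x‖ ≤ 2/ε - s} ⊆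
      ⋃ w ∈ S, cube d w := by
    intro x hx
    have hmem := mem_cube_floor x
    have hb := norm_le_of_mem_cube hmem
    have hwS : (fun i => ⌊x i⌋) ∈ S :=
      (hmemS _).mpr ⟨by linarith [hx.1, hb.1], by linarith [hx.2, hb.2]⟩
    exact Set.mem_biUnion hwS hmem
  have hIntU : IntegrableOn (fun x : EuclideanSpace ℝ (Fin d) => (‖x‖ ^ d)⁻¹)
      (⋃ w ∈ S, cube d w) := hIntAp.mono_set hUsub
  have hIntCube : ∀ w ∈ S, IntegrableOn (fun x : EuclideanSpace ℝ (Fin d) => (‖x‖ ^ d)⁻¹)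
      (cube d w) := fun w hw => hIntU.mono_set (Set.subset_biUnion_of_mem hw)
  have hEq : ∫ x in (⋃ w ∈ S, cube d w), (‖x‖ ^ d)⁻¹ =
      ∑ w ∈ S, ∫ x in cube d w, (‖x‖ ^ d)⁻¹ :=
    integral_biUnion_finset S (fun w _ => measurableSet_cube w)
      (fun w _ w' _ hne => cube_disjoint hne) hIntCube
  have hg0 : ∀ (t : Set (EuclideanSpace ℝ (Fin d))),
      (0 : EuclideanSpace ℝ (Fin d) → ℝ) ≤ᵐ[volume.restrict t]
        fun x => (‖x‖ ^ d)⁻¹ :=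
    fun t => Filter.Eventually.of_forall fun x => by positivity
  -- pointwise facts for w ∈ S
  have hwfacts : ∀ w ∈ S, 1 ≤ ε * ‖intPt d w‖ ∧ 0 < ‖intPt d w‖ - s := by
    intro w hw
    have hw' := (hmemS w).mp hw
    have h1 : ε * (1/ε) = 1 := by field_simp
    constructor
    · nlinarith [hw'.1]
    · nlinarith [hw'.1]
  -- upper bound
  have hP1 : (0:ℝ) < (1 - s*ε)^d := pow_pos h1s d
  have hP2 : (0:ℝ) < (1 + s*ε)^d := pow_pos h1s' d
  have upper : (∑ w ∈ S, (‖intPt d w‖ ^ d)⁻¹) ≤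
      (1 + s*ε)^d * (((d:ℝ) * unitBallVol d) *
        (Real.log (2 + s*ε) - Real.log (1 - s*ε))) := by
    have step1 : ∀ w ∈ S, (‖intPt d w‖ ^ d)⁻¹ ≤
        (1 + s*ε)^d * ∫ x in cube d w, (‖x‖ ^ d)⁻¹ := by
      intro w hw
      obtain ⟨haq, has⟩ := hwfacts w hw
      have ha : 0 < ‖intPt d w‖ := by nlinarith
      have hge := cube_integral_ge hd w (hIntCube w hw) has
      have hkey : (‖intPt d w‖ ^ d)⁻¹ ≤ (1 + s*ε)^d * ((‖intPt d w‖ + s) ^ d)⁻¹ := by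
        have hq : (‖intPt d w‖ + s)^d ≤ ((1 + s*ε) * ‖intPt d w‖)^d :=
          pow_le_pow_left₀ (by positivity) (by nlinarith) d
        rw [mul_pow] at hq
        have h2 : (((1 + s*ε)^d) * ‖intPt d w‖^d)⁻¹ ≤ ((‖intPt d w‖ + s) ^ d)⁻¹ :=
          inv_anti₀ (by positivity) hq
        calc (‖intPt d w‖ ^ d)⁻¹
            = (1 + s*ε)^d * (((1 + s*ε)^d) * ‖intPt d w‖^d)⁻¹ := by
              rw [mul_inv, ← mul_assoc, mul_inv_cancel₀ hP2.ne', one_mul]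
          _ ≤ _ := mul_le_mul_of_nonneg_left h2 hP2.le
      exact hkey.trans (mul_le_mul_of_nonneg_left hge hP2.le)
    have e1 : 2/ε + s = (2 + s*ε)/ε := by field_simp; try ring
    have e2 : 1/ε - s = (1 - s*ε)/ε := by field_simp; try ring
    calc ∑ w ∈ S, (‖intPt d w‖ ^ d)⁻¹
        ≤ ∑ w ∈ S, (1 + s*ε)^d * ∫ x in cube d w, (‖x‖ ^ d)⁻¹ := Finset.sum_le_sum step1
      _ = (1 + s*ε)^d * ∫ x in (⋃ w ∈ S, cube d w), (‖x‖ ^ d)⁻¹ := by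
          rw [← Finset.mul_sum, hEq]
      _ ≤ (1 + s*ε)^d * ∫ x in {x : EuclideanSpace ℝ (Fin d) | 1/ε - s < ‖x‖ ∧ ‖x‖ ≤ 2/ε + s},
            (‖x‖ ^ d)⁻¹ :=
          mul_le_mul_of_nonneg_left
            (setIntegral_mono_set hIntAp (hg0 _) hUsub.eventuallyLE) hP2.le
      _ = (1 + s*ε)^d * (((d:ℝ) * unitBallVol d) *
            (Real.log (2 + s*ε) - Real.log (1 - s*ε))) := by
          rw [integral_ann hd h1pos hAle, e1, e2,
            Real.log_div (by positivity) hε0.ne', Real.log_div h1s.ne' hε0.ne']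
          ring
  -- lower bound
  have lower : (1 - s*ε)^d * (((d:ℝ) * unitBallVol d) *
        (Real.log (2 - s*ε) - Real.log (1 + s*ε))) ≤
      ∑ w ∈ S, (‖intPt d w‖ ^ d)⁻¹ := by
    have step1 : ∀ w ∈ S, (1 - s*ε)^d * ∫ x in cube d w, (‖x‖ ^ d)⁻¹ ≤
        (‖intPt d w‖ ^ d)⁻¹ := by
      intro w hw
      obtain ⟨haq, has⟩ := hwfacts w hw
      have ha : 0 < ‖intPt d w‖ := by nlinarith
      have hle := cube_integral_le w (hIntCube w hw) has
      have hkey : (1 - s*ε)^d * ((‖intPt d w‖ - s) ^ d)⁻¹ ≤ (‖intPt d w‖ ^ d)⁻¹ := by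
        have hq : ((1 - s*ε) * ‖intPt d w‖)^d ≤ (‖intPt d w‖ - s)^d :=
          pow_le_pow_left₀ (by positivity) (by nlinarith) d
        rw [mul_pow] at hq
        have h2 : ((‖intPt d w‖ - s) ^ d)⁻¹ ≤ (((1 - s*ε)^d) * ‖intPt d w‖^d)⁻¹ :=
          inv_anti₀ (by positivity) hq
        calc (1 - s*ε)^d * ((‖intPt d w‖ - s) ^ d)⁻¹
            ≤ (1 - s*ε)^d * (((1 - s*ε)^d) * ‖intPt d w‖^d)⁻¹ :=
              mul_le_mul_of_nonneg_left h2 hP1.le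
          _ = (‖intPt d w‖ ^ d)⁻¹ := by
              rw [mul_inv, ← mul_assoc, mul_inv_cancel₀ hP1.ne', one_mul]
      exact (mul_le_mul_of_nonneg_left hle hP1.le).trans hkey
    have e1 : 2/ε - s = (2 - s*ε)/ε := by field_simp; try ring
    have e2 : 1/ε + s = (1 + s*ε)/ε := by field_simp; try ring
    have h2s : (0:ℝ) < 2 - s*ε := by nlinarith
    calc (1 - s*ε)^d * (((d:ℝ) * unitBallVol d) *
          (Real.log (2 - s*ε) - Real.log (1 + s*ε)))
        = (1 - s*ε)^d * ∫ x in {x : EuclideanSpace ℝ (Fin d) | 1/ε + s < ‖x‖ ∧ ‖x‖ ≤ 2/ε - s},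
            (‖x‖ ^ d)⁻¹ := by
          rw [integral_ann hd (by positivity) h2this, e1, e2,
            Real.log_div h2s.ne' hε0.ne', Real.log_div h1s'.ne' hε0.ne']
          ring
      _ ≤ (1 - s*ε)^d * ∫ x in (⋃ w ∈ S, cube d w), (‖x‖ ^ d)⁻¹ :=
          mul_le_mul_of_nonneg_left
            (setIntegral_mono_set hIntU (hg0 _) hAsub.eventuallyLE) hP1.le
      _ = ∑ w ∈ S, (1 - s*ε)^d * ∫ x in cube d w, (‖x‖ ^ d)⁻¹ := by
          rw [hEq, Finset.mul_sum]
      _ ≤ ∑ w ∈ S, (‖intPt d w‖ ^ d)⁻¹ := Finset.sum_le_sum step1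
  rw [hsum]
  exact ⟨lower, upper⟩


open scoped Classical in
/-- for `d ≥ 1`, `Σ_{w ∈ ℤ^d, 1/ε < |w| ≤ 2/ε} |w|^{-d} → d V_d ln 2`
as `ε → 0⁻` -/
theorem lattice_shell_limit (d : ℕ) (hd : 1 ≤ d) :
    Filter.Tendsto
      (fun ε : ℝ => ∑' w : Fin d → ℤ,
        (if 1 / ε < ‖intPt d w‖ ∧ ‖intPt d w‖ ≤ 2 / ε then (‖intPt d w‖ ^ d)⁻¹ else 0))
      (nhdsWithin 0 (Set.Ioi 0))
      (nhds (d * unitBallVol d * Real.log 2)) := by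
  classical
  set s := Real.sqrt d with hs_def
  have hs1 : (1:ℝ) ≤ s := by
    rw [hs_def, show (1:ℝ) = Real.sqrt 1 by simp]
    exact Real.sqrt_le_sqrt (by exact_mod_cast hd)
  have hs0 : (0:ℝ) < s := lt_of_lt_of_le one_pos hs1
  set C := (d : ℝ) * unitBallVol d with hC
  set lb : ℝ → ℝ := fun ε =>
    (1 - s*ε)^d * (C * (Real.log (2 - s*ε) - Real.log (1 + s*ε))) with hlb
  set ub : ℝ → ℝ := fun ε =>
    (1 + s*ε)^d * (C * (Real.log (2 + s*ε) - Real.log (1 - s*ε))) with hub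
  have hlbc : ContinuousAt lb 0 := by
    have h1 : ContinuousAt (fun ε : ℝ => Real.log (2 - s*ε)) 0 :=
      ContinuousAt.log (by fun_prop) (by norm_num)
    have h2 : ContinuousAt (fun ε : ℝ => Real.log (1 + s*ε)) 0 :=
      ContinuousAt.log (by fun_prop) (by norm_num)
    exact ((continuousAt_const.sub (continuousAt_const.mul continuousAt_id)).pow d).mul
      (continuousAt_const.mul (h1.sub h2))
  have hubc : ContinuousAt ub 0 := by
    have h1 : ContinuousAt (fun ε : ℝ => Real.log (2 + s*ε)) 0 :=
      ContinuousAt.log (by fun_prop) (by norm_num)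
    have h2 : ContinuousAt (fun ε : ℝ => Real.log (1 - s*ε)) 0 :=
      ContinuousAt.log (by fun_prop) (by norm_num)
    exact ((continuousAt_const.add (continuousAt_const.mul continuousAt_id)).pow d).mul
      (continuousAt_const.mul (h1.sub h2))
  have hlb0 : lb 0 = C * Real.log 2 := by simp [hlb, Real.log_one]
  have hub0 : ub 0 = C * Real.log 2 := by simp [hub, Real.log_one]
  have hlbt : Filter.Tendsto lb (nhdsWithin 0 (Set.Ioi 0)) (nhds (C * Real.log 2)) := by
    rw [← hlb0]; exact hlbc.tendsto.mono_left nhdsWithin_le_nhds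
  have hubt : Filter.Tendsto ub (nhdsWithin 0 (Set.Ioi 0)) (nhds (C * Real.log 2)) := by
    rw [← hub0]; exact hubc.tendsto.mono_left nhdsWithin_le_nhds
  have hCgoal : (d : ℝ) * unitBallVol d * Real.log 2 = C * Real.log 2 := by rw [hC]
  rw [hCgoal]
  set δ : ℝ := (2*(s+1))⁻¹ with hδ_def
  have hδ : 0 < δ := by positivity
  have hmem : Set.Ioo (0:ℝ) δ ∈ nhdsWithin (0:ℝ) (Set.Ioi 0) :=
    Ioo_mem_nhdsGT_of_mem ⟨le_refl 0, hδ⟩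
  apply tendsto_of_tendsto_of_tendsto_of_le_of_le' hlbt hubt
  · -- lower bound eventually
    filter_upwards [hmem] with ε hε
    exact (main_bounds d hd ε hε).1
  · filter_upwards [hmem] with ε hε
    exact (main_bounds d hd ε hε).2
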